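/- Let L be a finite-dimensional Lie algebra over ℂ carrying a nondegenerate symmetric invariant bilinear form B (invariance: B(⁅a,b⁆,c) = B(a,⁅b,c⁆) for all a,b,c ∈ L). Let x ∈ L be such that ad x is diagonalizable with all eigenvalues in ½ℤ; for j ∈ ½ℤ let g_j denote the eigenspace of ad x with eigenvalue j, so that L = ⊕_{j ∈ ½ℤ} g_j. Set g₊ = ⊕_{j > 0} g_j and g₋ = ⊕_{j < 0} g_j. Let j ∈ ½ℤ, u ∈ g_j and v ∈ g_{−j}. Then g₊ and g₋ are invariant under (ad u) ∘ (ad v) and under ad⁅u,v⁆, and tr_{g₋}((ad u) ∘ (ad v)) = tr_{g₊}((ad u) ∘ (ad v)) − tr_{g₊}(ad⁅u,v⁆), where tr_{g₊} and tr_{g₋} denote the traces of the restrictions of these operators to g₊ and g₋ respectively. -/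

import Mathlib

/-- Formula (5.12) of Remark 5.1 (Lie algebra case):
`tr_{g₋}((ad u)(ad v)) = tr_{g₊}((ad u)(ad v)) − tr_{g₊}(ad ⁅u,v⁆)`
for `u ∈ g_j`, `v ∈ g_{−j}`, together with the invariance of `g₊` and `g₋` under
`(ad u) ∘ (ad v)` and `ad ⁅u,v⁆`. -/
theorem trace_identity_5_12
    {L : Type*} [LieRing L] [LieAlgebra ℂ L] [FiniteDimensional ℂ L]
    (B : L →ₗ[ℂ] L →ₗ[ℂ] ℂ)
    (hsymm : ∀ a b, B a b = B b a)
    (hinv : ∀ a b c, B ⁅a, b⁆ c = B a ⁅b, c⁆)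
    (hnd : ∀ a, (∀ b, B a b = 0) → a = 0)
    (x : L) (g : ℤ → Submodule ℂ L)
    (hg : ∀ k : ℤ, g k = Module.End.eigenspace (LieAlgebra.ad ℂ L x) ((k : ℂ) / 2))
    (hdiag : (⨆ k : ℤ, g k) = ⊤)
    (gp gm : Submodule ℂ L)
    (hgp : gp = ⨆ k > (0 : ℤ), g k) (hgm : gm = ⨆ k < (0 : ℤ), g k)
    (k : ℤ) (u v : L) (hu : u ∈ g k) (hv : v ∈ g (-k))
    (A C : L →ₗ[ℂ] L)
    (hA : A = (LieAlgebra.ad ℂ L u) ∘ₗ (LieAlgebra.ad ℂ L v))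
    (hC : C = LieAlgebra.ad ℂ L ⁅u, v⁆) :
    (∀ z ∈ gp, A z ∈ gp) ∧ (∀ z ∈ gm, A z ∈ gm) ∧
    (∀ z ∈ gp, C z ∈ gp) ∧ (∀ z ∈ gm, C z ∈ gm) ∧
    ∀ (hAp : ∀ z ∈ gp, A z ∈ gp) (hAm : ∀ z ∈ gm, A z ∈ gm)
      (hCp : ∀ z ∈ gp, C z ∈ gp),
      LinearMap.trace ℂ gm (A.restrict hAm) =
        LinearMap.trace ℂ gp (A.restrict hAp) -
          LinearMap.trace ℂ gp (C.restrict hCp) := by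
  classical
  -- skew-symmetry of B with respect to ad
  have hskew : ∀ a b c : L, B ⁅a, b⁆ c = - B b ⁅a, c⁆ := by
    intro a b c
    have h1 : B ⁅a, b⁆ c = B (-⁅b, a⁆) c := by rw [lie_skew]
    rw [h1, map_neg, LinearMap.neg_apply, hinv]
  -- the grading shift lemma
  have hshift : ∀ (i j : ℤ) (a z : L), a ∈ g i → z ∈ g j → ⁅a, z⁆ ∈ g (i + j) := by
    intro i j a z ha hz
    rw [hg] at ha hz ⊢
    rw [Module.End.mem_eigenspace_iff] at ha hz ⊢
    rw [LieAlgebra.ad_apply] at ha hz ⊢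
    rw [leibniz_lie, ha, hz, smul_lie, lie_smul, ← add_smul]
    congr 1
    push_cast
    ring
  -- orthogonality of distinct-weight spaces
  have horth : ∀ (i j : ℤ), i + j ≠ 0 → ∀ a ∈ g i, ∀ w ∈ g j, B a w = 0 := by
    intro i j hij a ha w hw
    rw [hg, Module.End.mem_eigenspace_iff, LieAlgebra.ad_apply] at ha hw
    have h1 : B ⁅x, a⁆ w = - B a ⁅x, w⁆ := hskew x a w
    rw [ha, hw] at h1
    simp only [map_smul, LinearMap.smul_apply, smul_eq_mul] at h1
    have h2 : ((i : ℂ) + j) * B a w = 0 := by ring_nf; linear_combination 2 * h1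
    rcases mul_eq_zero.mp h2 with h | h
    · exact absurd (by exact_mod_cast h : i + j = 0) hij
    · exact h
  set A' : L →ₗ[ℂ] L := (LieAlgebra.ad ℂ L v) ∘ₗ (LieAlgebra.ad ℂ L u) with hA'
  -- the three operators preserve each weight space
  have hAg : ∀ (j : ℤ), ∀ z ∈ g j, A z ∈ g j := by
    intro j z hz
    have h1 : ⁅v, z⁆ ∈ g (-k + j) := hshift _ _ _ _ hv hz
    have h2 : ⁅u, ⁅v, z⁆⁆ ∈ g (k + (-k + j)) := hshift _ _ _ _ hu h1
    have h3 : k + (-k + j) = j := by ring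
    rw [h3] at h2
    simpa [hA, LieAlgebra.ad_apply] using h2
  have hA'g : ∀ (j : ℤ), ∀ z ∈ g j, A' z ∈ g j := by
    intro j z hz
    have h1 : ⁅u, z⁆ ∈ g (k + j) := hshift _ _ _ _ hu hz
    have h2 : ⁅v, ⁅u, z⁆⁆ ∈ g (-k + (k + j)) := hshift _ _ _ _ hv h1
    have h3 : -k + (k + j) = j := by ring
    rw [h3] at h2
    simpa [hA', LieAlgebra.ad_apply] using h2
  have hCg : ∀ (j : ℤ), ∀ z ∈ g j, C z ∈ g j := by
    intro j z hz
    have h0 : ⁅u, v⁆ ∈ g (k + -k) := hshift _ _ _ _ hu hv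
    have h1 : ⁅⁅u, v⁆, z⁆ ∈ g ((k + -k) + j) := hshift _ _ _ _ h0 hz
    have h3 : (k + -k) + j = j := by ring
    rw [h3] at h1
    simpa [hC, LieAlgebra.ad_apply] using h1
  -- preservation of gp and gm
  have hsup : ∀ (T : L →ₗ[ℂ] L), (∀ (j : ℤ), ∀ z ∈ g j, T z ∈ g j) →
      (∀ z ∈ gp, T z ∈ gp) ∧ (∀ z ∈ gm, T z ∈ gm) := by
    intro T hT
    constructor
    · intro z hz
      rw [hgp] at hz ⊢
      have hmap : Submodule.map T (⨆ j > (0 : ℤ), g j) ≤ ⨆ j > (0 : ℤ), g j := by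
        rw [Submodule.map_iSup]
        refine iSup_le fun j => ?_
        rw [Submodule.map_iSup]
        refine iSup_le fun hj => ?_
        refine le_trans ?_ (le_iSup₂ (f := fun j (_ : j > (0:ℤ)) => g j) j hj)
        rintro w ⟨z', hz', rfl⟩
        exact hT j z' hz'
      exact hmap ⟨z, hz, rfl⟩
    · intro z hz
      rw [hgm] at hz ⊢
      have hmap : Submodule.map T (⨆ j < (0 : ℤ), g j) ≤ ⨆ j < (0 : ℤ), g j := by
        rw [Submodule.map_iSup]
        refine iSup_le fun j => ?_
        rw [Submodule.map_iSup]
        refine iSup_le fun hj => ?_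
        refine le_trans ?_ (le_iSup₂ (f := fun j (_ : j < (0:ℤ)) => g j) j hj)
        rintro w ⟨z', hz', rfl⟩
        exact hT j z' hz'
      exact hmap ⟨z, hz, rfl⟩
  obtain ⟨hAp0, hAm0⟩ := hsup A hAg
  obtain ⟨hA'p0, hA'm0⟩ := hsup A' hA'g
  obtain ⟨hCp0, hCm0⟩ := hsup C hCg
  refine ⟨hAp0, hAm0, hCp0, hCm0, ?_⟩
  intro hAp hAm hCp
  -- nondegeneracy of the pairing gm × gp
  have hndm : ∀ m ∈ gm, (∀ p ∈ gp, B m p = 0) → m = 0 := by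
    intro m hm h0
    apply hnd
    intro w
    have hw : w ∈ (⨆ k : ℤ, g k) := by rw [hdiag]; trivial
    have hle : (⨆ k : ℤ, g k) ≤ LinearMap.ker (B m) := by
      refine iSup_le fun j => ?_
      intro w' hw'
      rw [LinearMap.mem_ker]
      by_cases hj : 0 < j
      · exact h0 w' (hgp ▸ (le_iSup₂ (f := fun j (_ : j > (0:ℤ)) => g j) j hj) hw')
      · have hle2 : gm ≤ LinearMap.ker (B.flip w') := by
          rw [hgm]
          refine iSup₂_le fun i hi => ?_
          intro z hz
          rw [LinearMap.mem_ker, LinearMap.flip_apply]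
          exact horth i j (by omega) z hz w' hw'
        have := hle2 hm
        rwa [LinearMap.mem_ker, LinearMap.flip_apply] at this
    exact hle hw
  have hndp : ∀ p ∈ gp, (∀ m ∈ gm, B p m = 0) → p = 0 := by
    intro p hp h0
    apply hnd
    intro w
    have hw : w ∈ (⨆ k : ℤ, g k) := by rw [hdiag]; trivial
    have hle : (⨆ k : ℤ, g k) ≤ LinearMap.ker (B p) := by
      refine iSup_le fun j => ?_
      intro w' hw'
      rw [LinearMap.mem_ker]
      by_cases hj : j < 0
      · exact h0 w' (hgm ▸ (le_iSup₂ (f := fun j (_ : j < (0:ℤ)) => g j) j hj) hw')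
      · have hle2 : gp ≤ LinearMap.ker (B.flip w') := by
          rw [hgp]
          refine iSup₂_le fun i hi => ?_
          intro z hz
          rw [LinearMap.mem_ker, LinearMap.flip_apply]
          exact horth i j (by omega) z hz w' hw'
        have := hle2 hp
        rwa [LinearMap.mem_ker, LinearMap.flip_apply] at this
    exact hle hw
  -- the pairing as a map to the dual
  set P : gm →ₗ[ℂ] Module.Dual ℂ gp := (B.domRestrict gm).compl₂ gp.subtype with hP
  set Q : gp →ₗ[ℂ] Module.Dual ℂ gm := (B.domRestrict gp).compl₂ gm.subtype with hQ
  have hPinj : Function.Injective P := by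
    rw [← LinearMap.ker_eq_bot]
    rw [eq_bot_iff]
    intro m hm
    rw [LinearMap.mem_ker] at hm
    have : (m : L) = 0 := by
      refine hndm m m.2 fun p hp => ?_
      have := congrArg (fun f => f ⟨p, hp⟩) hm
      simpa [P] using this
    exact Subtype.ext this
  have hQinj : Function.Injective Q := by
    rw [← LinearMap.ker_eq_bot]
    rw [eq_bot_iff]
    intro p hp
    rw [LinearMap.mem_ker] at hp
    have : (p : L) = 0 := by
      refine hndp p p.2 fun m hm => ?_
      have := congrArg (fun f => f ⟨m, hm⟩) hp
      simpa [Q] using this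
    exact Subtype.ext this
  have hfr : Module.finrank ℂ gm = Module.finrank ℂ (Module.Dual ℂ gp) := by
    have h1 : Module.finrank ℂ gm ≤ Module.finrank ℂ (Module.Dual ℂ gp) :=
      LinearMap.finrank_le_finrank_of_injective hPinj
    have h2 : Module.finrank ℂ gp ≤ Module.finrank ℂ (Module.Dual ℂ gm) :=
      LinearMap.finrank_le_finrank_of_injective hQinj
    rw [Subspace.dual_finrank_eq] at h1 h2 ⊢
    omega
  set e : gm ≃ₗ[ℂ] Module.Dual ℂ gp := P.linearEquivOfInjective hPinj hfr with he
  -- adjointness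
  have hadj : ∀ (m p : L), B (A m) p = B m (A' p) := by
    intro m p
    have h1 : B ⁅u, ⁅v, m⁆⁆ p = - B ⁅v, m⁆ ⁅u, p⁆ := hskew u ⁅v, m⁆ p
    have h2 : B ⁅v, m⁆ ⁅u, p⁆ = - B m ⁅v, ⁅u, p⁆⁆ := hskew v m ⁅u, p⁆
    simp only [hA, hA', LinearMap.comp_apply, LieAlgebra.ad_apply]
    rw [h1, h2, neg_neg]
  -- conjugation identity
  have hconj : e.conj (A.restrict hAm) =
      Module.Dual.transpose (R := ℂ) (A'.restrict hA'p0) := by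
    have happ : ∀ (m : gm) (p : gp), (e m) p = B m p := by
      intro m p
      rw [he, LinearMap.linearEquivOfInjective_apply]
      simp [P]
    ext φ p
    obtain ⟨m, rfl⟩ : ∃ m, e m = φ := ⟨e.symm φ, e.apply_symm_apply φ⟩
    rw [LinearEquiv.conj_apply_apply, e.symm_apply_apply, Module.Dual.transpose_apply]
    simp only [LinearMap.comp_apply, LinearMap.coe_comp, Function.comp_apply]
    rw [happ, happ]
    simp only [LinearMap.restrict_coe_apply]
    exact hadj m p
  have htr1 : LinearMap.trace ℂ gm (A.restrict hAm) =
      LinearMap.trace ℂ gp (A'.restrict hA'p0) := by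
    rw [← LinearMap.trace_conj' (A.restrict hAm) e, hconj, LinearMap.trace_transpose']
  -- C = A - A'
  have hCAA' : C = A - A' := by
    rw [hC, hA, hA']
    ext z
    simp only [LieAlgebra.ad_apply, LinearMap.sub_apply, LinearMap.comp_apply]
    exact lie_lie u v z
  have hrestr : A'.restrict hA'p0 = A.restrict hAp - C.restrict hCp := by
    ext p
    simp only [LinearMap.sub_apply, LinearMap.restrict_coe_apply, Submodule.coe_sub]
    rw [hCAA']
    simp
  rw [htr1, hrestr, map_sub]
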